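/- Discrete comparison principle: fix N ≥ 1 and a function G : ℝ³ × {1,…,N-1} → ℝ which is continuous, locally Lipschitz in (x,y,z), and non-increasing in its first and third arguments. Let u, v : {0,1/N,…,1} × [0,∞) → ℝ be differentiable in t and satisfy: ∂_t u(k/N, t) + G(u((k-1)/N,t), u(k/N,t), u((k+1)/N,t), k) ≤ 0 and ∂_t v(k/N, t) + G(v((k-1)/N,t), v(k/N,t), v((k+1)/N,t), k) ≥ 0 for all 1 ≤ k ≤ N-1 and t ≥ 0, together with u(0,t) ≤ v(0,t), u(1,t) ≤ v(1,t) for all t ≥ 0 and u(k/N,0) ≤ v(k/N,0) for all k. Then u(k/N,t) ≤ v(k/N,t) for all k and all t ≥ 0. -/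

import Mathlib

open Real Set Metric Filter

lemma myLipCompact {E : Type*} [MetricSpace E] {f : E → ℝ} (hf : LocallyLipschitz f)
    {K : Set E} (hK : IsCompact K) :
    ∃ L : ℝ, 0 ≤ L ∧ ∀ p ∈ K, ∀ q ∈ K, dist (f p) (f q) ≤ L * dist p q := by
  rcases K.eq_empty_or_nonempty with hne | hne
  · exact ⟨0, le_refl 0, by simp [hne]⟩
  have hball : ∀ x : E, ∃ r : ℝ, 0 < r ∧ ∃ L : NNReal, LipschitzOnWith L f (Metric.ball x r) := by
    intro x
    obtain ⟨L, t, ht, hL⟩ := hf x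
    obtain ⟨r, hr, hrt⟩ := Metric.mem_nhds_iff.mp ht
    exact ⟨r, hr, L, hL.mono hrt⟩
  choose r hr L hL using hball
  obtain ⟨s, -, hs⟩ := hK.elim_nhds_subcover (fun x => Metric.ball x (r x / 2))
    (fun x _ => Metric.ball_mem_nhds x (by have := hr x; positivity))
  have hsne : s.Nonempty := by
    obtain ⟨x0, hx0⟩ := hne
    have := hs hx0
    simp only [Set.mem_iUnion] at this
    obtain ⟨i, hi, _⟩ := this
    exact ⟨i, hi⟩
  set ρ : ℝ := s.inf' hsne (fun x => r x / 2) with hρdef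
  have hρ : 0 < ρ := by
    rw [hρdef, Finset.lt_inf'_iff]
    intro b _
    have := hr b; positivity
  set Λ : ℝ := s.sup' hsne (fun x => (L x : ℝ)) with hΛdef
  have hΛ : 0 ≤ Λ := by
    obtain ⟨i, hi⟩ := hsne
    exact le_trans (L i).coe_nonneg (Finset.le_sup' (fun x => ((L x : ℝ))) hi)
  have hbd : Bornology.IsBounded (f '' K) :=
    (hK.image_of_continuousOn hf.continuous.continuousOn).isBounded
  obtain ⟨M, hM⟩ := Metric.isBounded_iff.mp hbd
  have hM0 : 0 ≤ M := by
    obtain ⟨x0, hx0⟩ := hne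
    have := hM (Set.mem_image_of_mem f hx0) (Set.mem_image_of_mem f hx0)
    simpa using this
  refine ⟨max Λ (M / ρ), le_trans hΛ (le_max_left _ _), fun p hp q hq => ?_⟩
  by_cases hpq : dist p q < ρ
  · have := hs hp
    simp only [Set.mem_iUnion] at this
    obtain ⟨i, hi, hpi⟩ := this
    have hρi : ρ ≤ r i / 2 := Finset.inf'_le _ hi
    have hqi : q ∈ Metric.ball i (r i) := by
      rw [Metric.mem_ball] at hpi ⊢
      calc dist q i ≤ dist q p + dist p i := dist_triangle _ _ _
        _ < ρ + r i / 2 := by rw [dist_comm q p]; linarith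
        _ ≤ r i := by linarith
    have hpi' : p ∈ Metric.ball i (r i) := by
      rw [Metric.mem_ball] at hpi ⊢
      have := hr i; linarith
    calc dist (f p) (f q) ≤ (L i) * dist p q := (hL i).dist_le_mul p hpi' q hqi
      _ ≤ Λ * dist p q := by
          apply mul_le_mul_of_nonneg_right (Finset.le_sup' (fun x => ((L x : ℝ))) hi) dist_nonneg
      _ ≤ max Λ (M / ρ) * dist p q :=
          mul_le_mul_of_nonneg_right (le_max_left _ _) dist_nonneg
  · push_neg at hpq
    calc dist (f p) (f q) ≤ M := hM (Set.mem_image_of_mem f hp) (Set.mem_image_of_mem f hq)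
      _ = (M / ρ) * ρ := by field_simp
      _ ≤ (M / ρ) * dist p q := by
          apply mul_le_mul_of_nonneg_left hpq (by positivity)
      _ ≤ max Λ (M / ρ) * dist p q :=
          mul_le_mul_of_nonneg_right (le_max_right _ _) dist_nonneg

lemma myDerivMax {f : ℝ → ℝ} {b d : ℝ} (hb : 0 < b)
    (hmax : ∀ s ∈ Set.Icc (0:ℝ) b, f s ≤ f b) (hd : HasDerivAt f d b) : 0 ≤ d := by
  have h1 : HasDerivWithinAt f d (Set.Iio b) b := hd.hasDerivWithinAt
  rw [hasDerivWithinAt_iff_tendsto_slope] at h1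
  have heq : Set.Iio b \ {b} = Set.Iio b := by
    apply Set.diff_singleton_eq_self; simp
  rw [heq] at h1
  refine ge_of_tendsto h1 ?_
  filter_upwards [Ioo_mem_nhdsLT hb] with s hs
  rw [slope_def_field]
  apply div_nonneg_of_nonpos
  · have := hmax s ⟨hs.1.le, hs.2.le⟩; linarith
  · linarith [hs.2]

/-- Discrete comparison principle for a monotone system of ODEs. -/
theorem discrete_comparison (N : ℕ) (hN : 1 ≤ N)
    (G : ℝ → ℝ → ℝ → ℕ → ℝ)
    (hGcont : ∀ k : ℕ, Continuous fun p : ℝ × ℝ × ℝ => G p.1 p.2.1 p.2.2 k)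
    (hGlip : ∀ k : ℕ, LocallyLipschitz fun p : ℝ × ℝ × ℝ => G p.1 p.2.1 p.2.2 k)
    (hGmono1 : ∀ (y z : ℝ) (k : ℕ), Antitone fun x => G x y z k)
    (hGmono3 : ∀ (x y : ℝ) (k : ℕ), Antitone fun z => G x y z k)
    (u v u' v' : ℕ → ℝ → ℝ)
    (hu : ∀ (k : ℕ) (t : ℝ), k ≤ N → 0 ≤ t → HasDerivAt (u k) (u' k t) t)
    (hv : ∀ (k : ℕ) (t : ℝ), k ≤ N → 0 ≤ t → HasDerivAt (v k) (v' k t) t)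
    (hsub : ∀ (k : ℕ) (t : ℝ), 1 ≤ k → k ≤ N - 1 → 0 ≤ t →
      u' k t + G (u (k - 1) t) (u k t) (u (k + 1) t) k ≤ 0)
    (hsup : ∀ (k : ℕ) (t : ℝ), 1 ≤ k → k ≤ N - 1 → 0 ≤ t →
      0 ≤ v' k t + G (v (k - 1) t) (v k t) (v (k + 1) t) k)
    (hb0 : ∀ t : ℝ, 0 ≤ t → u 0 t ≤ v 0 t)
    (hbN : ∀ t : ℝ, 0 ≤ t → u N t ≤ v N t)
    (hinit : ∀ k : ℕ, k ≤ N → u k 0 ≤ v k 0) :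
    ∀ (k : ℕ) (t : ℝ), k ≤ N → 0 ≤ t → u k t ≤ v k t := by
  intro k t hk ht
  -- continuity of u j, v j on [0, t]
  have hcu : ∀ j : ℕ, j ≤ N → ContinuousOn (u j) (Set.Icc 0 t) := fun j hj x hx =>
    ((hu j x hj hx.1).continuousAt).continuousWithinAt
  have hcv : ∀ j : ℕ, j ≤ N → ContinuousOn (v j) (Set.Icc 0 t) := fun j hj x hx =>
    ((hv j x hj hx.1).continuousAt).continuousWithinAt
  -- uniform bound R on all values
  have hbdd : ∀ j : ℕ, ∃ M : ℝ, 0 ≤ M ∧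
      (j ≤ N → ∀ s ∈ Set.Icc (0:ℝ) t, |u j s| ≤ M ∧ |v j s| ≤ M) := by
    intro j
    by_cases hj : j ≤ N
    · obtain ⟨M1, hM1⟩ := isCompact_Icc.exists_bound_of_continuousOn (hcu j hj)
      obtain ⟨M2, hM2⟩ := isCompact_Icc.exists_bound_of_continuousOn (hcv j hj)
      refine ⟨max 0 (max M1 M2), le_max_left _ _, fun _ s hs => ⟨?_, ?_⟩⟩
      · have := hM1 s hs; rw [Real.norm_eq_abs] at this
        calc |u j s| ≤ M1 := this
          _ ≤ max 0 (max M1 M2) := le_trans (le_max_left _ _) (le_max_right _ _)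
      · have := hM2 s hs; rw [Real.norm_eq_abs] at this
        calc |v j s| ≤ M2 := this
          _ ≤ max 0 (max M1 M2) := le_trans (le_max_right _ _) (le_max_right _ _)
    · exact ⟨0, le_refl 0, fun h => absurd h hj⟩
  choose Mb hMb0 hMb using hbdd
  have hrne : (Finset.range (N + 1)).Nonempty := ⟨0, Finset.mem_range.mpr (Nat.succ_pos N)⟩
  set R : ℝ := (Finset.range (N + 1)).sup' hrne Mb with hRdef
  have hR0 : 0 ≤ R := le_trans (hMb0 0) (Finset.le_sup' Mb (Finset.mem_range.mpr (Nat.succ_pos N)))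
  have hRub : ∀ j : ℕ, j ≤ N → ∀ s ∈ Set.Icc (0:ℝ) t, |u j s| ≤ R ∧ |v j s| ≤ R := by
    intro j hj s hs
    have h1 := hMb j hj s hs
    have h2 : Mb j ≤ R := Finset.le_sup' Mb (Finset.mem_range.mpr (Nat.lt_succ_of_le hj))
    exact ⟨le_trans h1.1 h2, le_trans h1.2 h2⟩
  -- compact box and Lipschitz constants
  set K : Set (ℝ × ℝ × ℝ) :=
    Set.Icc (-(3*R+1), -(3*R+1), -(3*R+1)) (3*R+1, 3*R+1, 3*R+1) with hKdef
  have hKcomp : IsCompact K := isCompact_Icc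
  have hLex : ∀ j : ℕ, ∃ Lc : ℝ, 0 ≤ Lc ∧ ∀ p ∈ K, ∀ q ∈ K,
      dist (G p.1 p.2.1 p.2.2 j) (G q.1 q.2.1 q.2.2 j) ≤ Lc * dist p q :=
    fun j => myLipCompact (hGlip j) hKcomp
  choose Lc hLc0 hLc using hLex
  set L : ℝ := (Finset.range (N + 1)).sup' hrne Lc with hLdef
  have hL0 : 0 ≤ L := le_trans (hLc0 0) (Finset.le_sup' Lc (Finset.mem_range.mpr (Nat.succ_pos N)))
  set C : ℝ := L + 1 with hCdef
  -- the auxiliary functions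
  set ψ : ℕ → ℝ → ℝ := fun j s => (u j s - v j s) * Real.exp (-C * s) with hψdef
  have hψcont : ∀ j : ℕ, j ≤ N → ContinuousOn (ψ j) (Set.Icc 0 t) := by
    intro j hj
    rw [hψdef]
    exact ((hcu j hj).sub (hcv j hj)).mul
      ((Real.continuous_exp.comp (continuous_const.mul continuous_id)).continuousOn)
  -- per-index maximizers
  have hts : ∀ j : ℕ, ∃ s0 : ℝ, s0 ∈ Set.Icc (0:ℝ) t ∧
      (j ≤ N → ∀ s ∈ Set.Icc (0:ℝ) t, ψ j s ≤ ψ j s0) := by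
    intro j
    by_cases hj : j ≤ N
    · obtain ⟨s0, hs0, hmax⟩ := isCompact_Icc.exists_isMaxOn (Set.nonempty_Icc.mpr ht)
        (hψcont j hj)
      exact ⟨s0, hs0, fun _ s hs => hmax hs⟩
    · exact ⟨0, ⟨le_refl 0, ht⟩, fun h => absurd h hj⟩
  choose ts hts1 hts2 using hts
  obtain ⟨j0, hj0mem, hj0max⟩ := Finset.exists_max_image (Finset.range (N + 1))
    (fun j => ψ j (ts j)) hrne
  have hj0N : j0 ≤ N := Nat.lt_succ_iff.mp (Finset.mem_range.mp hj0mem)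
  set t0 : ℝ := ts j0 with ht0def
  have key : ∀ j : ℕ, j ≤ N → ∀ s ∈ Set.Icc (0:ℝ) t, ψ j s ≤ ψ j0 t0 := by
    intro j hj s hs
    exact le_trans (hts2 j hj s hs)
      (hj0max j (Finset.mem_range.mpr (Nat.lt_succ_of_le hj)))
  have ht0mem : t0 ∈ Set.Icc (0:ℝ) t := hts1 j0
  have hθ : ψ j0 t0 ≤ 0 := by
    by_contra hcon
    push_neg at hcon
    have hexp : 0 < Real.exp (-C * t0) := Real.exp_pos _
    set δ : ℝ := u j0 t0 - v j0 t0 with hδdef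
    have hψval : ψ j0 t0 = δ * Real.exp (-C * t0) := by rw [hψdef]
    rw [hψval] at hcon
    have hδpos : 0 < δ := by
      by_contra h
      push_neg at h
      have := mul_nonpos_iff.mpr (Or.inr ⟨h, hexp.le⟩)
      linarith
    -- t0 > 0
    have ht0pos : 0 < t0 := by
      rcases ht0mem.1.lt_or_eq with h | h
      · exact h
      · exfalso
        have hδ0 : δ ≤ 0 := by
          rw [hδdef, ← h]
          exact sub_nonpos.mpr (hinit j0 hj0N)
        linarith
    -- j0 strictly interior
    have hj01 : 1 ≤ j0 := by
      by_contra hj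
      push_neg at hj
      have h0 : j0 = 0 := by omega
      have hδ0 : δ ≤ 0 := by
        rw [hδdef, h0]
        exact sub_nonpos.mpr (hb0 t0 ht0mem.1)
      linarith
    have hj0neN : j0 ≠ N := by
      intro h
      have hδ0 : δ ≤ 0 := by
        rw [hδdef, h]
        exact sub_nonpos.mpr (hbN t0 ht0mem.1)
      linarith
    have hj0le : j0 ≤ N - 1 := by omega
    have hj1le : j0 + 1 ≤ N := by omega
    have hjm1le : j0 - 1 ≤ N := by omega
    -- neighbor comparison
    have hnb : ∀ j : ℕ, j ≤ N → u j t0 - v j t0 ≤ δ := by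
      intro j hj
      have h1 := key j hj t0 ht0mem
      rw [hψdef] at h1
      simp only at h1
      rw [hδdef]
      exact le_of_mul_le_mul_right h1 hexp
    -- derivative of ψ j0 at t0
    have hder : HasDerivAt (ψ j0)
        ((u' j0 t0 - v' j0 t0 - C * δ) * Real.exp (-C * t0)) t0 := by
      have hinner : HasDerivAt (fun s : ℝ => -C * s) (-C) t0 := by
        simpa using (hasDerivAt_id t0).const_mul (-C)
      have h1 : HasDerivAt (fun s : ℝ => Real.exp (-C * s))
          (Real.exp (-C * t0) * (-C)) t0 :=
        (Real.hasDerivAt_exp (-C * t0)).comp t0 hinner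
      have h2 := ((hu j0 t0 hj0N ht0mem.1).sub (hv j0 t0 hj0N ht0mem.1)).mul h1
      rw [hψdef]
      convert h2 using 1
      · rfl
      · rfl
      · rfl
      rw [hδdef, Pi.sub_apply]; ring
    have hmax0 : ∀ s ∈ Set.Icc (0:ℝ) t0, ψ j0 s ≤ ψ j0 t0 := fun s hs =>
      key j0 hj0N s ⟨hs.1, le_trans hs.2 ht0mem.2⟩
    have hd0 := myDerivMax ht0pos hmax0 hder
    have hder2 : C * δ ≤ u' j0 t0 - v' j0 t0 := by
      by_contra h
      push_neg at h
      have : (u' j0 t0 - v' j0 t0 - C * δ) * Real.exp (-C * t0) < 0 :=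
        mul_neg_of_neg_of_pos (by linarith) hexp
      linarith
    -- differential inequalities
    have h1 := hsub j0 t0 hj01 hj0le ht0mem.1
    have h2 := hsup j0 t0 hj01 hj0le ht0mem.1
    -- monotonicity of G
    have hu0 : u j0 t0 = v j0 t0 + δ := by rw [hδdef]; ring
    have hm1 : G (v (j0-1) t0 + δ) (u j0 t0) (u (j0+1) t0) j0 ≤
        G (u (j0-1) t0) (u j0 t0) (u (j0+1) t0) j0 :=
      hGmono1 _ _ j0 (by have := hnb (j0-1) hjm1le; linarith)
    have hm3 : G (v (j0-1) t0 + δ) (v j0 t0 + δ) (v (j0+1) t0 + δ) j0 ≤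
        G (v (j0-1) t0 + δ) (v j0 t0 + δ) (u (j0+1) t0) j0 :=
      hGmono3 _ _ j0 (by have := hnb (j0+1) hj1le; linarith)
    -- the Lipschitz estimate
    set P : ℝ × ℝ × ℝ := (v (j0-1) t0, v j0 t0, v (j0+1) t0) with hPdef
    set Q : ℝ × ℝ × ℝ := (v (j0-1) t0 + δ, v j0 t0 + δ, v (j0+1) t0 + δ) with hQdef
    have hδle : δ ≤ 2 * R := by
      have h3 := hRub j0 hj0N t0 ht0mem
      rw [hδdef]
      cases' abs_le.mp h3.1 with a1 a2
      cases' abs_le.mp h3.2 with b1 b2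
      linarith
    have hvb : ∀ j : ℕ, j ≤ N → -(3*R+1) ≤ v j t0 ∧ v j t0 + δ ≤ 3*R+1 := by
      intro j hj
      have h3 := (hRub j hj t0 ht0mem).2
      cases' abs_le.mp h3 with a1 a2
      constructor <;> linarith
    have hPK : P ∈ K := by
      rw [hKdef]
      simp only [Set.mem_Icc, Prod.le_def, hPdef]
      obtain ⟨a1, a2⟩ := hvb (j0-1) hjm1le
      obtain ⟨b1, b2⟩ := hvb j0 hj0N
      obtain ⟨c1, c2⟩ := hvb (j0+1) hj1le
      refine ⟨⟨a1, b1, c1⟩, ⟨by linarith, by linarith, by linarith⟩⟩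
    have hQK : Q ∈ K := by
      rw [hKdef]
      simp only [Set.mem_Icc, Prod.le_def, hQdef]
      obtain ⟨a1, a2⟩ := hvb (j0-1) hjm1le
      obtain ⟨b1, b2⟩ := hvb j0 hj0N
      obtain ⟨c1, c2⟩ := hvb (j0+1) hj1le
      refine ⟨⟨by linarith, by linarith, by linarith⟩, ⟨a2, b2, c2⟩⟩
    have hdistPQ : dist P Q = δ := by
      rw [hPdef, hQdef]
      simp only [Prod.dist_eq, Real.dist_eq]
      have : ∀ a : ℝ, |a - (a + δ)| = δ := by
        intro a
        rw [show a - (a + δ) = -δ by ring, abs_neg, abs_of_nonneg hδpos.le]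
      simp only [this]
      simp [max_self]
    have hGd := hLc j0 P hPK Q hQK
    rw [hdistPQ, Real.dist_eq] at hGd
    have hGd2 : G P.1 P.2.1 P.2.2 j0 - G Q.1 Q.2.1 Q.2.2 j0 ≤ Lc j0 * δ :=
      le_trans (le_abs_self _) hGd
    have hLle : Lc j0 ≤ L := Finset.le_sup' Lc (Finset.mem_range.mpr (Nat.lt_succ_of_le hj0N))
    -- put everything together
    have hP1 : P.1 = v (j0-1) t0 := rfl
    have hP2 : P.2.1 = v j0 t0 := rfl
    have hP3 : P.2.2 = v (j0+1) t0 := rfl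
    have hQ1 : Q.1 = v (j0-1) t0 + δ := rfl
    have hQ2 : Q.2.1 = v j0 t0 + δ := rfl
    have hQ3 : Q.2.2 = v (j0+1) t0 + δ := rfl
    rw [hP1, hP2, hP3, hQ1, hQ2, hQ3] at hGd2
    rw [hu0] at hm1
    have hchain : C * δ ≤ L * δ := by
      have e1 : u' j0 t0 - v' j0 t0 ≤
          G (v (j0-1) t0) (v j0 t0) (v (j0+1) t0) j0 -
          G (u (j0-1) t0) (u j0 t0) (u (j0+1) t0) j0 := by linarith
      have e2 : G (v (j0-1) t0 + δ) (v j0 t0 + δ) (v (j0+1) t0 + δ) j0 ≤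
          G (u (j0-1) t0) (u j0 t0) (u (j0+1) t0) j0 := by
        rw [hu0]; exact le_trans hm3 hm1
      have e3 : C * δ ≤ Lc j0 * δ := by linarith
      have := mul_le_mul_of_nonneg_right hLle hδpos.le
      linarith
    rw [hCdef] at hchain
    have : (L + 1) * δ = L * δ + δ := by ring
    linarith
  -- conclude
  have hfin := key k hk t ⟨ht, le_refl t⟩
  have hfin2 : (u k t - v k t) * Real.exp (-C * t) ≤ 0 := by
    rw [hψdef] at hfin
    simp only at hfin
    exact le_trans hfin hθ
  by_contra h
  push_neg at h
  have := mul_pos (sub_pos.mpr h) (Real.exp_pos (-C * t))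
  linarith
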